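/- Let φ : B(K) → B(H) be a positive linear map, ξ ∈ K and x ∈ H unit vectors, λ > 0 with φ(ξξ*)x = λx. Define B ∈ B(K,H) by Bη = λ^{-1/2} φ(ηξ*)x and ψ(X) = BXB*. Then φ − ψ is a positive map if and only if for all η ∈ K and y ∈ H: |⟨y, φ(ηξ*)x⟩|² ≤ ⟨x, φ(ξξ*)x⟩ · ⟨y, φ(ηη*)y⟩. -/

import Mathlib

open ContinuousLinearMap ComplexConjugate

/-- `rk1 ξ η` is the rank-one operator `ξη* : τ ↦ ⟨η, τ⟩ ξ`. -/
noncomputable def rk1 {H : Type*} [NormedAddCommGroup H] [InnerProductSpace ℂ H]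
    (ξ η : H) : H →L[ℂ] H := (innerSL ℂ η).smulRight ξ

/-- An operator `T` is positive if `⟨y, T y⟩ ≥ 0` for every `y`. -/
def PosOp {H : Type*} [NormedAddCommGroup H] [InnerProductSpace ℂ H]
    (T : H →L[ℂ] H) : Prop :=
  ∀ y : H, 0 ≤ (inner ℂ y (T y) : ℂ).re ∧ (inner ℂ y (T y) : ℂ).im = 0

lemma rk1_apply {H : Type*} [NormedAddCommGroup H] [InnerProductSpace ℂ H]
    (ξ η τ : H) : rk1 ξ η τ = (inner ℂ η τ : ℂ) • ξ := rfl

lemma inner_rk1_self {H : Type*} [NormedAddCommGroup H] [InnerProductSpace ℂ H]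
    (η u : H) : (inner ℂ u (rk1 η η u) : ℂ) = ((‖(inner ℂ u η : ℂ)‖ ^ 2 : ℝ) : ℂ) := by
  rw [rk1_apply, inner_smul_right, ← inner_conj_symm η u, RCLike.conj_mul]
  norm_cast

lemma posOp_rk1 {H : Type*} [NormedAddCommGroup H] [InnerProductSpace ℂ H]
    (η : H) : PosOp (rk1 η η) := by
  intro u
  rw [inner_rk1_self]
  exact ⟨by rw [Complex.ofReal_re]; positivity, by rw [Complex.ofReal_im]⟩

lemma posOp_symm {E : Type*} [NormedAddCommGroup E] [InnerProductSpace ℂ E]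
    {T : E →L[ℂ] E} (hT : PosOp T) (a b : E) :
    (inner ℂ (T a) b : ℂ) = inner ℂ a (T b) := by
  have : (T : E →ₗ[ℂ] E).IsSymmetric := by
    rw [LinearMap.isSymmetric_iff_inner_map_self_real]
    intro v
    simp only [ContinuousLinearMap.coe_coe]
    have h2 := (hT v).2
    have hv : (inner ℂ (T v) v : ℂ) = conj (inner ℂ v (T v) : ℂ) := (inner_conj_symm _ _).symm
    rw [hv, Complex.conj_conj]
    exact (Complex.conj_eq_iff_im.mpr h2).symm
  exact this a b

/-- Cauchy–Schwarz for a positive operator. -/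
lemma posOp_cs {E : Type*} [NormedAddCommGroup E] [InnerProductSpace ℂ E]
    {T : E →L[ℂ] E} (hT : PosOp T) (u v : E) :
    ‖(inner ℂ u (T v) : ℂ)‖ ^ 2 ≤ (inner ℂ u (T u) : ℂ).re * (inner ℂ v (T v) : ℂ).re := by
  letI c : PreInnerProductSpace.Core ℂ E :=
    { inner := fun a b => inner ℂ a (T b)
      conj_inner_symm := fun a b => by
        show conj (inner ℂ b (T a)) = inner ℂ a (T b)
        rw [inner_conj_symm, posOp_symm hT]
      re_inner_nonneg := fun a => (hT a).1
      add_left := fun a b d => by simp only [inner_add_left]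
      smul_left := fun a b r => by simp only [inner_smul_left] }
  have key : ‖(inner ℂ u (T v) : ℂ)‖ * ‖(inner ℂ v (T u) : ℂ)‖ ≤
      (inner ℂ u (T u) : ℂ).re * (inner ℂ v (T v) : ℂ).re :=
    @InnerProductSpace.Core.inner_mul_inner_self_le ℂ E _ _ _ c u v
  have h2 : ‖(inner ℂ v (T u) : ℂ)‖ = ‖(inner ℂ u (T v) : ℂ)‖ := by
    rw [← inner_conj_symm v (T u), RCLike.norm_conj, posOp_symm hT]
  rw [sq]
  calc ‖(inner ℂ u (T v) : ℂ)‖ * ‖(inner ℂ u (T v) : ℂ)‖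
      = ‖(inner ℂ u (T v) : ℂ)‖ * ‖(inner ℂ v (T u) : ℂ)‖ := by rw [h2]
    _ ≤ _ := key

theorem stmt15 {K H : Type*}
    [NormedAddCommGroup K] [InnerProductSpace ℂ K] [CompleteSpace K]
    [NormedAddCommGroup H] [InnerProductSpace ℂ H] [CompleteSpace H]
    (φ : (K →L[ℂ] K) →ₗ[ℂ] (H →L[ℂ] H))
    (hpos : ∀ T, PosOp T → PosOp (φ T))
    (ξ : K) (x : H) (hξ : ‖ξ‖ = 1) (hx : ‖x‖ = 1)
    (l : ℝ) (hl : 0 < l) (heig : (φ (rk1 ξ ξ)) x = l • x)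
    (B : K →L[ℂ] H)
    (hB : ∀ η : K, B η = (Real.sqrt l)⁻¹ • (φ (rk1 η ξ)) x) :
    (∀ T : K →L[ℂ] K, PosOp T →
        PosOp (φ T - B ∘L T ∘L ContinuousLinearMap.adjoint B)) ↔
      ∀ (η : K) (y : H),
        ‖(inner ℂ y ((φ (rk1 η ξ)) x) : ℂ)‖ ^ 2 ≤
          (inner ℂ x ((φ (rk1 ξ ξ)) x) : ℂ).re * (inner ℂ y ((φ (rk1 η η)) y) : ℂ).re := by
  have hs : Real.sqrt l ≠ 0 := ne_of_gt (Real.sqrt_pos.mpr hl)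
  have hsq : Real.sqrt l ^ 2 = l := Real.sq_sqrt hl.le
  have hxx : (inner ℂ x x : ℂ) = 1 := by
    rw [inner_self_eq_norm_sq_to_K, hx]; norm_num
  have hxl : (inner ℂ x ((φ (rk1 ξ ξ)) x) : ℂ) = (l : ℂ) := by
    rw [heig, RCLike.real_smul_eq_coe_smul (K := ℂ), inner_smul_right, hxx, mul_one]
    norm_num
  have hxlre : (inner ℂ x ((φ (rk1 ξ ξ)) x) : ℂ).re = l := by rw [hxl, Complex.ofReal_re]
  have hBin : ∀ (η : K) (y : H), (inner ℂ y (B η) : ℂ)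
      = (((Real.sqrt l)⁻¹ : ℝ) : ℂ) * inner ℂ y ((φ (rk1 η ξ)) x) := by
    intro η y
    rw [hB, RCLike.real_smul_eq_coe_smul (K := ℂ), inner_smul_right]
    norm_num
  have hadj : ∀ (y : H) (η : K), (inner ℂ ((ContinuousLinearMap.adjoint B) y) η : ℂ)
      = inner ℂ y (B η) := fun y η => ContinuousLinearMap.adjoint_inner_left B η y
  constructor
  · intro hΔ η y
    obtain ⟨h1, -⟩ := hΔ (rk1 η η) (posOp_rk1 η) y
    have hψ : (inner ℂ y ((B ∘L rk1 η η ∘L ContinuousLinearMap.adjoint B) y) : ℂ)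
        = ((l⁻¹ * ‖(inner ℂ y ((φ (rk1 η ξ)) x) : ℂ)‖ ^ 2 : ℝ) : ℂ) := by
      have e1 : (B ∘L rk1 η η ∘L ContinuousLinearMap.adjoint B) y
          = (inner ℂ η ((ContinuousLinearMap.adjoint B) y) : ℂ) • B η := by
        simp only [ContinuousLinearMap.comp_apply, rk1_apply, map_smul]
      have h3 : (inner ℂ η ((ContinuousLinearMap.adjoint B) y) : ℂ)
          = (starRingEnd ℂ) (inner ℂ y (B η) : ℂ) := by
        rw [← inner_conj_symm η ((ContinuousLinearMap.adjoint B) y), hadj]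
      have hn : ‖(((Real.sqrt l)⁻¹ : ℝ) : ℂ) * (inner ℂ y ((φ (rk1 η ξ)) x) : ℂ)‖ ^ 2
          = l⁻¹ * ‖(inner ℂ y ((φ (rk1 η ξ)) x) : ℂ)‖ ^ 2 := by
        rw [norm_mul, mul_pow, Complex.norm_real, Real.norm_eq_abs, sq_abs, inv_pow, hsq]
      rw [e1, inner_smul_right, h3, RCLike.conj_mul, hBin η y]
      rw [← RCLike.ofReal_pow, hn]; rfl
    rw [ContinuousLinearMap.sub_apply, inner_sub_right, hψ, Complex.sub_re,
      Complex.ofReal_re, sub_nonneg] at h1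
    rw [hxlre]
    calc ‖(inner ℂ y ((φ (rk1 η ξ)) x) : ℂ)‖ ^ 2
        = l * (l⁻¹ * ‖(inner ℂ y ((φ (rk1 η ξ)) x) : ℂ)‖ ^ 2) := by field_simp
      _ ≤ l * (inner ℂ y ((φ (rk1 η η)) y) : ℂ).re := by
          exact mul_le_mul_of_nonneg_left h1 hl.le
  · intro h T hT y
    have hψ : (inner ℂ y ((B ∘L T ∘L ContinuousLinearMap.adjoint B) y) : ℂ)
        = inner ℂ ((ContinuousLinearMap.adjoint B) y) (T ((ContinuousLinearMap.adjoint B) y)) := by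
      simp only [ContinuousLinearMap.comp_apply]
      exact (ContinuousLinearMap.adjoint_inner_left B _ y).symm
    set ζ := (ContinuousLinearMap.adjoint B) y with hζdef
    obtain ⟨hφre, hφim⟩ := hpos T hT y
    obtain ⟨hc0, hcim⟩ := hT ζ
    rw [ContinuousLinearMap.sub_apply, inner_sub_right, hψ]
    refine ⟨?_, by rw [Complex.sub_im, hφim, hcim, sub_zero]⟩
    rw [Complex.sub_re, sub_nonneg]
    set c := (inner ℂ ζ (T ζ) : ℂ).re with hcdef
    rcases eq_or_lt_of_le hc0 with hc | hc
    · exact hc ▸ hφre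
    have hcz : (inner ℂ ζ (T ζ) : ℂ) = (c : ℂ) :=
      Complex.ext (by rw [Complex.ofReal_re]) (by rw [Complex.ofReal_im, hcim])
    have hS : PosOp (T - ((c⁻¹ : ℝ) : ℂ) • rk1 (T ζ) (T ζ)) := by
      intro u
      have hcs := posOp_cs hT u ζ
      obtain ⟨hure, huim⟩ := hT u
      have hexp : (inner ℂ u ((T - ((c⁻¹ : ℝ) : ℂ) • rk1 (T ζ) (T ζ)) u) : ℂ)
          = inner ℂ u (T u) - ((c⁻¹ * ‖(inner ℂ u (T ζ) : ℂ)‖ ^ 2 : ℝ) : ℂ) := by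
        rw [ContinuousLinearMap.sub_apply, ContinuousLinearMap.smul_apply, inner_sub_right,
          inner_smul_right, inner_rk1_self]
        push_cast
        ring
      rw [hexp]
      constructor
      · rw [Complex.sub_re, Complex.ofReal_re, sub_nonneg]
        calc c⁻¹ * ‖(inner ℂ u (T ζ) : ℂ)‖ ^ 2
            ≤ c⁻¹ * ((inner ℂ u (T u) : ℂ).re * c) :=
              mul_le_mul_of_nonneg_left hcs (inv_nonneg.mpr hc0)
          _ = (inner ℂ u (T u) : ℂ).re := by field_simp
      · rw [Complex.sub_im, Complex.ofReal_im, huim, sub_zero]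
    have hres := (hpos _ hS y).1
    rw [map_sub, map_smul, ContinuousLinearMap.sub_apply, ContinuousLinearMap.smul_apply,
      inner_sub_right, inner_smul_right, Complex.sub_re, Complex.re_ofReal_mul,
      sub_nonneg] at hres
    have hkey := h (T ζ) y
    rw [hxlre] at hkey
    have hwc : (inner ℂ y ((φ (rk1 (T ζ) ξ)) x) : ℂ) = ((Real.sqrt l : ℝ) : ℂ) * (c : ℂ) := by
      have h1 := hBin (T ζ) y
      have h2 : (inner ℂ y (B (T ζ)) : ℂ) = (c : ℂ) := by rw [← hadj y (T ζ)]; exact hcz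
      rw [h2] at h1
      have hslc : ((Real.sqrt l : ℝ) : ℂ) ≠ 0 := Complex.ofReal_ne_zero.mpr hs
      field_simp at h1
      rw [h1, Complex.ofReal_div, Complex.ofReal_one, ← mul_assoc, mul_one_div_cancel hslc, one_mul]
    rw [hwc] at hkey
    have hnorm : ‖((Real.sqrt l : ℝ) : ℂ) * (c : ℂ)‖ ^ 2 = l * c ^ 2 := by
      rw [← Complex.ofReal_mul, Complex.norm_real, Real.norm_eq_abs, sq_abs, mul_pow, hsq]
    rw [hnorm] at hkey
    have hQ : c ^ 2 ≤ (inner ℂ y ((φ (rk1 (T ζ) (T ζ))) y) : ℂ).re :=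
      le_of_mul_le_mul_left hkey hl
    calc c = c⁻¹ * c ^ 2 := by field_simp [ne_of_gt hc]
      _ ≤ c⁻¹ * (inner ℂ y ((φ (rk1 (T ζ) (T ζ))) y) : ℂ).re :=
          mul_le_mul_of_nonneg_left hQ (inv_nonneg.mpr hc0)
      _ ≤ (inner ℂ y ((φ T) y) : ℂ).re := hres
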